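/- Let b_α(v, φ) := a(v₁, φ₂) + a(φ₁, v₂) + c_α(v, φ) on V = V₁ × V₂. Then for all v, w, φ ∈ V, |b_α(v, φ) − b_α(w, φ)| ≤ M_a · d_α(v, w) · ‖φ‖, where d_α(v, w) := ‖v − w‖ + (M / (M_a √α)) δ_α(v, w) and M := max{M_I, M_C}. -/

import Mathlib

open RealInnerProductSpace

/-- Continuity of the form `b_α`: with `b_α(x,φ) = a(x₁,φ₂) + a(φ₁,x₂) + c_α(x,φ)`,
for all `v, w, φ ∈ V = V₁ × V₂` one has
`|b_α(v,φ) − b_α(w,φ)| ≤ Ma · d_α(v,w) · ‖φ‖`, where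
`d_α(v,w) = ‖v−w‖ + (M/(Ma√α)) δ_α(v,w)`, `M = max{M_I, M_C}`,
and `‖·‖` is the ℓ²-product norm on `V`. -/

private lemma cs2_aux (a b c d : ℝ) (ha : 0 ≤ a) (hb : 0 ≤ b) (hc : 0 ≤ c) (hd : 0 ≤ d) :
    a * c + b * d ≤ Real.sqrt (a ^ 2 + b ^ 2) * Real.sqrt (c ^ 2 + d ^ 2) := by
  rw [← Real.sqrt_mul (by positivity)]
  have h : a * c + b * d = Real.sqrt ((a * c + b * d) ^ 2) :=
    (Real.sqrt_sq (by positivity)).symm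
  rw [h]
  apply Real.sqrt_le_sqrt
  nlinarith [sq_nonneg (a * d - b * c)]

theorem stmt9 {V₁ V₂ Q W : Type*}
    [NormedAddCommGroup V₁] [InnerProductSpace ℝ V₁] [CompleteSpace V₁]
    [NormedAddCommGroup V₂] [InnerProductSpace ℝ V₂] [CompleteSpace V₂]
    [NormedAddCommGroup Q] [InnerProductSpace ℝ Q] [CompleteSpace Q]
    [NormedAddCommGroup W] [InnerProductSpace ℝ W] [CompleteSpace W]
    (a : V₁ →ₗ[ℝ] V₂ →ₗ[ℝ] ℝ) (Ma MI MC M α : ℝ) (hMa : 0 < Ma) (hα : 0 < α)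
    (hcont : ∀ (v₁ : V₁) (v₂ : V₂), |a v₁ v₂| ≤ Ma * ‖v₁‖ * ‖v₂‖)
    (I : V₁ →L[ℝ] W) (hI : ‖I‖ ≤ MI)
    (Cstar : V₂ →L[ℝ] Q) (hC : ‖Cstar‖ ≤ MC)
    (hM : M = max MI MC)
    (K : Set Q) (hne : K.Nonempty) (hcl : IsClosed K) (hconv : Convex ℝ K)
    (proj : Q → Q) (hmem : ∀ q, proj q ∈ K) (hlip : LipschitzWith 1 proj)
    (cα bα : (V₁ × V₂) → (V₁ × V₂) → ℝ)
    (hcα : ∀ x φ : V₁ × V₂, cα x φ =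
      -⟪proj ((-(Real.sqrt α)⁻¹) • Cstar x.2), Cstar φ.2⟫
        - (Real.sqrt α)⁻¹ * ⟪I x.1, I φ.1⟫)
    (hbα : ∀ x φ : V₁ × V₂, bα x φ = a x.1 φ.2 + a φ.1 x.2 + cα x φ)
    (v w φ : V₁ × V₂) :
    |bα v φ - bα w φ| ≤ Ma *
      (Real.sqrt (‖v.1 - w.1‖ ^ 2 + ‖v.2 - w.2‖ ^ 2)
        + M / (Ma * Real.sqrt α) *
          Real.sqrt (α * ‖proj ((-(Real.sqrt α)⁻¹) • Cstar v.2)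
              - proj ((-(Real.sqrt α)⁻¹) • Cstar w.2)‖ ^ 2 + ‖I (v.1 - w.1)‖ ^ 2)) *
      Real.sqrt (‖φ.1‖ ^ 2 + ‖φ.2‖ ^ 2) := by
  have hsα : (0:ℝ) < Real.sqrt α := Real.sqrt_pos.2 hα
  set Pv := proj ((-(Real.sqrt α)⁻¹) • Cstar v.2) with hPv
  set Pw := proj ((-(Real.sqrt α)⁻¹) • Cstar w.2) with hPw
  have hMI : 0 ≤ MI := le_trans (norm_nonneg I) hI
  have hMC : 0 ≤ MC := le_trans (norm_nonneg Cstar) hC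
  have hMIM : MI ≤ M := hM ▸ le_max_left _ _
  have hMCM : MC ≤ M := hM ▸ le_max_right _ _
  have hM0 : 0 ≤ M := le_trans hMI hMIM
  have key : bα v φ - bα w φ =
      a (v.1 - w.1) φ.2 + a φ.1 (v.2 - w.2)
        + (-⟪Pv - Pw, Cstar φ.2⟫ - (Real.sqrt α)⁻¹ * ⟪I (v.1 - w.1), I φ.1⟫) := by
    rw [hbα, hbα, hcα, hcα]
    simp only [map_sub, LinearMap.sub_apply, inner_sub_left, ← hPv, ← hPw]
    ring
  rw [key]
  set S := Real.sqrt (‖v.1 - w.1‖ ^ 2 + ‖v.2 - w.2‖ ^ 2) with hS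
  set P := Real.sqrt (‖φ.1‖ ^ 2 + ‖φ.2‖ ^ 2) with hP
  set D := Real.sqrt (α * ‖Pv - Pw‖ ^ 2 + ‖I (v.1 - w.1)‖ ^ 2) with hD
  have hbound1 : |a (v.1 - w.1) φ.2 + a φ.1 (v.2 - w.2)| ≤ Ma * (S * P) := by
    have h1 := hcont (v.1 - w.1) φ.2
    have h2 := hcont φ.1 (v.2 - w.2)
    have hcs := cs2_aux ‖v.1 - w.1‖ ‖v.2 - w.2‖ ‖φ.2‖ ‖φ.1‖
      (norm_nonneg _) (norm_nonneg _) (norm_nonneg _) (norm_nonneg _)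
    rw [show ‖φ.2‖ ^ 2 + ‖φ.1‖ ^ 2 = ‖φ.1‖ ^ 2 + ‖φ.2‖ ^ 2 by ring] at hcs
    rw [← hS, ← hP] at hcs
    calc |a (v.1 - w.1) φ.2 + a φ.1 (v.2 - w.2)|
        ≤ |a (v.1 - w.1) φ.2| + |a φ.1 (v.2 - w.2)| := abs_add_le _ _
      _ ≤ Ma * ‖v.1 - w.1‖ * ‖φ.2‖ + Ma * ‖φ.1‖ * ‖v.2 - w.2‖ := add_le_add h1 h2
      _ = Ma * (‖v.1 - w.1‖ * ‖φ.2‖ + ‖v.2 - w.2‖ * ‖φ.1‖) := by ring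
      _ ≤ Ma * (S * P) := by
          exact mul_le_mul_of_nonneg_left hcs hMa.le
  have hbound2 : |(-⟪Pv - Pw, Cstar φ.2⟫ - (Real.sqrt α)⁻¹ * ⟪I (v.1 - w.1), I φ.1⟫ : ℝ)|
      ≤ M / Real.sqrt α * (D * P) := by
    have h3 : |(⟪Pv - Pw, Cstar φ.2⟫ : ℝ)| ≤ ‖Pv - Pw‖ * (M * ‖φ.2‖) := by
      calc |(⟪Pv - Pw, Cstar φ.2⟫ : ℝ)| ≤ ‖Pv - Pw‖ * ‖Cstar φ.2‖ :=
            abs_real_inner_le_norm _ _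
        _ ≤ ‖Pv - Pw‖ * (M * ‖φ.2‖) := by
            apply mul_le_mul_of_nonneg_left _ (norm_nonneg _)
            calc ‖Cstar φ.2‖ ≤ MC * ‖φ.2‖ := Cstar.le_of_opNorm_le hC _
              _ ≤ M * ‖φ.2‖ := mul_le_mul_of_nonneg_right hMCM (norm_nonneg _)
    have h4 : |(⟪I (v.1 - w.1), I φ.1⟫ : ℝ)| ≤ ‖I (v.1 - w.1)‖ * (M * ‖φ.1‖) := by
      calc |(⟪I (v.1 - w.1), I φ.1⟫ : ℝ)| ≤ ‖I (v.1 - w.1)‖ * ‖I φ.1‖ :=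
            abs_real_inner_le_norm _ _
        _ ≤ ‖I (v.1 - w.1)‖ * (M * ‖φ.1‖) := by
            apply mul_le_mul_of_nonneg_left _ (norm_nonneg _)
            calc ‖I φ.1‖ ≤ MI * ‖φ.1‖ := I.le_of_opNorm_le hI _
              _ ≤ M * ‖φ.1‖ := mul_le_mul_of_nonneg_right hMIM (norm_nonneg _)
    have hcs := cs2_aux (Real.sqrt α * ‖Pv - Pw‖) ‖I (v.1 - w.1)‖ ‖φ.2‖ ‖φ.1‖
      (by positivity) (norm_nonneg _) (norm_nonneg _) (norm_nonneg _)
    rw [show (Real.sqrt α * ‖Pv - Pw‖) ^ 2 = α * ‖Pv - Pw‖ ^ 2 by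
        rw [mul_pow, Real.sq_sqrt hα.le],
      show ‖φ.2‖ ^ 2 + ‖φ.1‖ ^ 2 = ‖φ.1‖ ^ 2 + ‖φ.2‖ ^ 2 by ring, ← hD, ← hP] at hcs
    calc |(-⟪Pv - Pw, Cstar φ.2⟫ - (Real.sqrt α)⁻¹ * ⟪I (v.1 - w.1), I φ.1⟫ : ℝ)|
        ≤ |(⟪Pv - Pw, Cstar φ.2⟫ : ℝ)| + (Real.sqrt α)⁻¹ * |(⟪I (v.1 - w.1), I φ.1⟫ : ℝ)| := by
          calc |(-⟪Pv - Pw, Cstar φ.2⟫ - (Real.sqrt α)⁻¹ * ⟪I (v.1 - w.1), I φ.1⟫ : ℝ)|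
              ≤ |(-⟪Pv - Pw, Cstar φ.2⟫ : ℝ)| + |(Real.sqrt α)⁻¹ * ⟪I (v.1 - w.1), I φ.1⟫| :=
                abs_sub _ _
            _ = |(⟪Pv - Pw, Cstar φ.2⟫ : ℝ)| + (Real.sqrt α)⁻¹ * |(⟪I (v.1 - w.1), I φ.1⟫ : ℝ)| := by
                rw [abs_neg, abs_mul, abs_of_pos (by positivity : (0:ℝ) < (Real.sqrt α)⁻¹)]
      _ ≤ ‖Pv - Pw‖ * (M * ‖φ.2‖) + (Real.sqrt α)⁻¹ * (‖I (v.1 - w.1)‖ * (M * ‖φ.1‖)) := by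
          gcongr
      _ = M / Real.sqrt α * (Real.sqrt α * ‖Pv - Pw‖ * ‖φ.2‖ + ‖I (v.1 - w.1)‖ * ‖φ.1‖) := by
          field_simp
      _ ≤ M / Real.sqrt α * (D * P) := by
          apply mul_le_mul_of_nonneg_left hcs (by positivity)
  calc |a (v.1 - w.1) φ.2 + a φ.1 (v.2 - w.2)
        + (-⟪Pv - Pw, Cstar φ.2⟫ - (Real.sqrt α)⁻¹ * ⟪I (v.1 - w.1), I φ.1⟫)|
      ≤ |a (v.1 - w.1) φ.2 + a φ.1 (v.2 - w.2)|
        + |(-⟪Pv - Pw, Cstar φ.2⟫ - (Real.sqrt α)⁻¹ * ⟪I (v.1 - w.1), I φ.1⟫ : ℝ)| := abs_add_le _ _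
    _ ≤ Ma * (S * P) + M / Real.sqrt α * (D * P) := add_le_add hbound1 hbound2
    _ = Ma * (S + M / (Ma * Real.sqrt α) * D) * P := by
        field_simp
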